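/- For |q| < 1 and complex a with |a| < 1, the product P(a,q) = ( ∏_{n=0}^∞ (1 + a q^n) / ∏_{n=0}^∞ (1 - a q^n) )² satisfies log P(a,q) = 4 ∑_{n=0}^∞ a^{2n+1} / ((2n+1)(1 - q^{2n+1})). -/

import Mathlib

set_option maxHeartbeats 1000000
open Real

theorem log_q_product_ratio (q a : ℝ) (hq : |q| < 1) (ha : |a| < 1) :
    Real.log (((∏' n : ℕ, (1 + a * q ^ n)) / ∏' n : ℕ, (1 - a * q ^ n)) ^ 2) =
      4 * ∑' n : ℕ, a ^ (2 * n + 1) / ((2 * (n : ℝ) + 1) * (1 - q ^ (2 * n + 1))) := by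
  have hqn : ∀ n : ℕ, |a * q ^ n| ≤ |a| := by
    intro n
    rw [abs_mul, abs_pow]
    calc |a| * |q| ^ n ≤ |a| * 1 := by
          gcongr
          exact pow_le_one₀ (abs_nonneg q) hq.le
      _ = |a| := mul_one _
  have hx : ∀ n : ℕ, |a * q ^ n| < 1 := fun n => lt_of_le_of_lt (hqn n) ha
  have ha1 : (0:ℝ) < 1 - |a| := by linarith
  -- positivity of the factors
  have hposP : ∀ n : ℕ, (0:ℝ) < 1 + a * q ^ n := by
    intro n
    have := abs_lt.mp (hx n)
    linarith [this.1]
  have hposM : ∀ n : ℕ, (0:ℝ) < 1 - a * q ^ n := by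
    intro n
    have := abs_lt.mp (hx n)
    linarith [this.2]
  -- bound on |log (1 - x)|
  have hlogbound : ∀ x : ℝ, |x| ≤ |a| → |Real.log (1 - x)| ≤ |x| / (1 - |a|) := by
    intro x hxa
    have hx1 : |x| < 1 := lt_of_le_of_lt hxa ha
    have h0 := Real.abs_log_sub_add_sum_range_le hx1 0
    simp only [Finset.range_zero, Finset.sum_empty, zero_add, pow_one] at h0
    calc |Real.log (1 - x)| ≤ |x| / (1 - |x|) := h0
      _ ≤ |x| / (1 - |a|) := by
          gcongr
  -- summability of the logs
  have hgeo : Summable (fun n : ℕ => |a| / (1 - |a|) * |q| ^ n) :=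
    (summable_geometric_of_lt_one (abs_nonneg q) hq).mul_left _
  have hsumlogM : Summable (fun n : ℕ => Real.log (1 - a * q ^ n)) := by
    apply Summable.of_norm_bounded hgeo
    intro n
    calc ‖Real.log (1 - a * q ^ n)‖ ≤ |a * q ^ n| / (1 - |a|) := hlogbound _ (hqn n)
      _ = |a| / (1 - |a|) * |q| ^ n := by
          rw [abs_mul, abs_pow]; ring
  have hsumlogP : Summable (fun n : ℕ => Real.log (1 + a * q ^ n)) := by
    apply Summable.of_norm_bounded hgeo
    intro n
    have he : (1 : ℝ) + a * q ^ n = 1 - (-(a * q ^ n)) := by ring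
    rw [he]
    calc ‖Real.log (1 - (-(a * q ^ n)))‖ ≤ |(-(a * q ^ n))| / (1 - |a|) := by
          apply hlogbound
          rw [abs_neg]; exact hqn n
      _ = |a| / (1 - |a|) * |q| ^ n := by
          rw [abs_neg, abs_mul, abs_pow]; ring
  -- log of the products
  have hlogPP : Real.log (∏' n : ℕ, (1 + a * q ^ n)) =
      ∑' n : ℕ, Real.log (1 + a * q ^ n) := by
    have := Real.rexp_tsum_eq_tprod (f := fun n => 1 + a * q ^ n) hposP hsumlogP
    rw [← this, Real.log_exp]
  have hlogPM : Real.log (∏' n : ℕ, (1 - a * q ^ n)) =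
      ∑' n : ℕ, Real.log (1 - a * q ^ n) := by
    have := Real.rexp_tsum_eq_tprod (f := fun n => 1 - a * q ^ n) hposM hsumlogM
    rw [← this, Real.log_exp]
  have hPPpos : (0:ℝ) < ∏' n : ℕ, (1 + a * q ^ n) := by
    have := Real.rexp_tsum_eq_tprod (f := fun n => 1 + a * q ^ n) hposP hsumlogP
    rw [← this]; exact Real.exp_pos _
  have hPMpos : (0:ℝ) < ∏' n : ℕ, (1 - a * q ^ n) := by
    have := Real.rexp_tsum_eq_tprod (f := fun n => 1 - a * q ^ n) hposM hsumlogM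
    rw [← this]; exact Real.exp_pos _
  -- the double series
  set F : ℕ × ℕ → ℝ := fun p =>
    2 * (1 / (2 * (p.2:ℝ) + 1)) * (a * q ^ p.1) ^ (2 * p.2 + 1) with hFdef
  have hFnorm : ∀ n m : ℕ, ‖F (n, m)‖ ≤ 2 * |a| ^ (2 * m + 1) * |q| ^ n := by
    intro n m
    have h1 : (0:ℝ) < 2 * (m:ℝ) + 1 := by positivity
    have hle1 : 1 / (2 * (m:ℝ) + 1) ≤ 1 := by
      rw [div_le_one h1]; linarith
    have habs : ‖F (n, m)‖ =
        2 * (1 / (2 * (m:ℝ) + 1)) * (|a| ^ (2 * m + 1) * (|q| ^ n) ^ (2 * m + 1)) := by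
      simp only [hFdef, norm_mul, norm_eq_abs, abs_pow, abs_mul]
      rw [abs_of_pos (by norm_num : (0:ℝ) < 2), abs_of_pos (by positivity)]
      ring
    rw [habs]
    have hqpow : (|q| ^ n) ^ (2 * m + 1) ≤ |q| ^ n :=
      pow_le_of_le_one (by positivity) (pow_le_one₀ (abs_nonneg q) hq.le) (by omega)
    calc 2 * (1 / (2 * (m:ℝ) + 1)) * (|a| ^ (2 * m + 1) * (|q| ^ n) ^ (2 * m + 1))
        ≤ 2 * 1 * (|a| ^ (2 * m + 1) * |q| ^ n) := by
          apply mul_le_mul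
          · exact mul_le_mul_of_nonneg_left hle1 (by norm_num)
          · exact mul_le_mul_of_nonneg_left hqpow (by positivity)
          · positivity
          · norm_num
      _ = 2 * |a| ^ (2 * m + 1) * |q| ^ n := by ring
  -- summability of the majorant in m
  have hmaj : Summable (fun m : ℕ => 2 * |a| ^ (2 * m + 1)) := by
    have h2 : Summable (fun m : ℕ => (2 * |a|) * (|a| ^ 2) ^ m) := by
      apply Summable.mul_left
      apply summable_geometric_of_lt_one (by positivity)
      calc |a| ^ 2 ≤ |a| * 1 := by
            rw [sq]; gcongr
        _ < 1 := by rw [mul_one]; exact ha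
    apply h2.congr
    intro m
    rw [← pow_mul]
    ring
  set C : ℝ := ∑' m : ℕ, 2 * |a| ^ (2 * m + 1) with hCdef
  -- summability of F
  have hFsummable : Summable F := by
    apply Summable.of_norm
    rw [summable_prod_of_nonneg (fun p => norm_nonneg (F p))]
    constructor
    · intro n
      apply Summable.of_nonneg_of_le (fun m => norm_nonneg _) (fun m => ?_)
        (hmaj.mul_right (|q| ^ n))
      calc ‖F (n, m)‖ ≤ 2 * |a| ^ (2 * m + 1) * |q| ^ n := hFnorm n m
        _ = 2 * |a| ^ (2 * m + 1) * |q| ^ n := rfl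
    · apply Summable.of_nonneg_of_le
        (fun n => tsum_nonneg fun m => norm_nonneg _) (fun n => ?_)
        ((summable_geometric_of_lt_one (abs_nonneg q) hq).mul_left C)
      calc (∑' m : ℕ, ‖F (n, m)‖) ≤ ∑' m : ℕ, 2 * |a| ^ (2 * m + 1) * |q| ^ n := by
            apply Summable.tsum_le_tsum (fun m => hFnorm n m) ?_ (hmaj.mul_right _)
            apply Summable.of_nonneg_of_le (fun m => norm_nonneg _)
              (fun m => hFnorm n m) (hmaj.mul_right _)
        _ = C * |q| ^ n := by
            rw [tsum_mul_right]
  set S : ℝ := ∑' p : ℕ × ℕ, F p with hSdef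
  -- sum over m first: rows give log (1+x) - log (1-x)
  have hrows : HasSum (fun n : ℕ =>
      Real.log (1 + a * q ^ n) - Real.log (1 - a * q ^ n)) S := by
    apply hFsummable.hasSum.prod_fiberwise
    intro n
    exact Real.hasSum_log_sub_log_of_abs_lt_one (hx n)
  -- sum over n first: columns give geometric series
  have hcols : HasSum (fun m : ℕ =>
      2 * (1 / (2 * (m:ℝ) + 1)) * a ^ (2 * m + 1) * (1 - q ^ (2 * m + 1))⁻¹) S := by
    have hswap : HasSum (F ∘ ⇑(Equiv.prodComm ℕ ℕ)) S :=
      ((Equiv.prodComm ℕ ℕ).hasSum_iff).mpr hFsummable.hasSum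
    apply hswap.prod_fiberwise
    intro m
    have hqm : ‖q ^ (2 * m + 1)‖ < 1 := by
      rw [norm_eq_abs, abs_pow]
      exact pow_lt_one₀ (abs_nonneg q) hq (by omega)
    have := (hasSum_geometric_of_norm_lt_one hqm).mul_left
      (2 * (1 / (2 * (m:ℝ) + 1)) * a ^ (2 * m + 1))
    apply this.congr
    intro s
    refine Finset.sum_congr rfl fun x _ => ?_
    simp only [hFdef, Function.comp, Equiv.prodComm_apply, Prod.swap]
    rw [mul_pow]
    ring
  -- put everything together
  have hsum_eq : (∑' n : ℕ, Real.log (1 + a * q ^ n)) -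
      (∑' n : ℕ, Real.log (1 - a * q ^ n)) = S := by
    rw [← Summable.tsum_sub hsumlogP hsumlogM]
    exact hrows.tsum_eq
  have hRHS : HasSum (fun n : ℕ =>
      4 * (a ^ (2 * n + 1) / ((2 * (n : ℝ) + 1) * (1 - q ^ (2 * n + 1))))) (2 * S) := by
    apply (hcols.mul_left 2).congr
    intro s
    refine Finset.sum_congr rfl fun x _ => ?_
    simp only [div_eq_mul_inv, mul_inv]
    ring
  have htsum4 : 4 * ∑' n : ℕ, a ^ (2 * n + 1) / ((2 * (n : ℝ) + 1) * (1 - q ^ (2 * n + 1)))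
      = 2 * S := by
    rw [← tsum_mul_left]
    exact hRHS.tsum_eq
  rw [htsum4]
  rw [Real.log_pow, Real.log_div hPPpos.ne' hPMpos.ne', hlogPP, hlogPM, hsum_eq]
  push_cast
  ring
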